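/- Suppose Assumption 1 holds. Then the operator norm of conv, where both the domain ℝ^{d_in×h_in×w_in} and the codomain ℝ^{d_out×h_out×w_out} carry the ℓ1 norm (sum of absolute values over all entries), equals max_{1≤j≤d_in} max_{𝒜∈𝒮} Σ_{(k,t)∈𝒜} Σ_{i=1}^{d_out} |K(i,j,k,t)|. -/

import Mathlib

/-!
2D multi-channel convolutional layer, 0-based reindexing of the 1-based
description in the paper.  The input is `X : Fin d_in × Fin h_in × Fin w_in → ℝ`
(a 3D tensor), the kernel is `K : Fin d_out → Fin d_in → Fin k1 → Fin k2 → ℝ`,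
strides `s1 s2`, paddings `p1 p2`,
`h_out = (h_in + 2*p1 - k1)/s1 + 1`, `w_out = (w_in + 2*p2 - k2)/s2 + 1`.
-/

noncomputable section

/-- Zero-padded input, accessed with 0-based padded coordinates `a b`
(so `a` ranges over `0, …, h_in + 2*p1 - 1`):
`padX X j a b = X (j, a - p1, b - p2)` when `p1 ≤ a < h_in + p1` and
`p2 ≤ b < w_in + p2`, and `0` otherwise. -/
def padX (d_in h_in w_in p1 p2 : ℕ)
    (X : Fin d_in × Fin h_in × Fin w_in → ℝ) (j : Fin d_in) (a b : ℕ) : ℝ :=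
  if h : p1 ≤ a ∧ a < h_in + p1 ∧ p2 ≤ b ∧ b < w_in + p2 then
    X (j, ⟨a - p1, by omega⟩, ⟨b - p2, by omega⟩)
  else 0

/-- The 2D multi-channel convolution:
`conv(X)(i,r,c) = ∑ j ∑ k ∑ t, K i j k t * X̃(j, r*s1 + k, c*s2 + t)`
(all indices 0-based). -/
def convMap (d_in d_out h_in w_in k1 k2 s1 s2 p1 p2 : ℕ)
    (K : Fin d_out → Fin d_in → Fin k1 → Fin k2 → ℝ)
    (X : Fin d_in × Fin h_in × Fin w_in → ℝ) :
    Fin d_out × Fin ((h_in + 2*p1 - k1)/s1 + 1) × Fin ((w_in + 2*p2 - k2)/s2 + 1) → ℝ :=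
  fun irc => ∑ j : Fin d_in, ∑ k : Fin k1, ∑ t : Fin k2,
    K irc.1 j k t *
      padX d_in h_in w_in p1 p2 X j (irc.2.1.val * s1 + k.val) (irc.2.2.val * s2 + t.val)

lemma padX_add (d_in h_in w_in p1 p2 : ℕ)
    (X Y : Fin d_in × Fin h_in × Fin w_in → ℝ) (j : Fin d_in) (a b : ℕ) :
    padX d_in h_in w_in p1 p2 (X + Y) j a b =
      padX d_in h_in w_in p1 p2 X j a b + padX d_in h_in w_in p1 p2 Y j a b := by
  unfold padX; split <;> simp

lemma padX_smul (d_in h_in w_in p1 p2 : ℕ) (c : ℝ)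
    (X : Fin d_in × Fin h_in × Fin w_in → ℝ) (j : Fin d_in) (a b : ℕ) :
    padX d_in h_in w_in p1 p2 (c • X) j a b = c * padX d_in h_in w_in p1 p2 X j a b := by
  unfold padX; split <;> simp

/-- `conv` as a linear map between the spaces of 3D tensors. -/
def convLinMap (d_in d_out h_in w_in k1 k2 s1 s2 p1 p2 : ℕ)
    (K : Fin d_out → Fin d_in → Fin k1 → Fin k2 → ℝ) :
    ((Fin d_in × Fin h_in × Fin w_in) → ℝ) →ₗ[ℝ]
      ((Fin d_out × Fin ((h_in + 2*p1 - k1)/s1 + 1) × Fin ((w_in + 2*p2 - k2)/s2 + 1)) → ℝ) where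
  toFun := convMap d_in d_out h_in w_in k1 k2 s1 s2 p1 p2 K
  map_add' X Y := by
    funext irc
    simp only [convMap, padX_add, mul_add, Finset.sum_add_distrib, Pi.add_apply]
  map_smul' c X := by
    funext irc
    simp only [convMap, padX_smul, RingHom.id_apply, Pi.smul_apply, smul_eq_mul,
      Finset.mul_sum]
    congr 1; funext j; congr 1; funext k; congr 1; funext t; ring

/-- `conv` as a continuous linear map between the spaces of 3D tensors,
both equipped with the `ℓ1` norm (sum of absolute values of all entries). -/
def convCLM1 (d_in d_out h_in w_in k1 k2 s1 s2 p1 p2 : ℕ)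
    (K : Fin d_out → Fin d_in → Fin k1 → Fin k2 → ℝ) :
    PiLp 1 (fun _ : Fin d_in × Fin h_in × Fin w_in => ℝ) →L[ℝ]
      PiLp 1 (fun _ : Fin d_out × Fin ((h_in + 2*p1 - k1)/s1 + 1) ×
        Fin ((w_in + 2*p2 - k2)/s2 + 1) => ℝ) :=
  LinearMap.toContinuousLinearMap
    (((WithLp.linearEquiv 1 ℝ _).symm.toLinearMap.comp
        (convLinMap d_in d_out h_in w_in k1 k2 s1 s2 p1 p2 K)).comp
      (WithLp.linearEquiv 1 ℝ _).toLinearMap)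

/-- The index set `𝒜_(a,b)` of Lemma 1 (0-based):
`{(c,d) : s1 ∣ c - a, s2 ∣ d - b, 0 ≤ c - a ≤ h_in + 2p1 - k1, 0 ≤ d - b ≤ w_in + 2p2 - k2}`. -/
def AFin (h_in w_in k1 k2 s1 s2 p1 p2 : ℕ) (a : Fin k1) (b : Fin k2) :
    Finset (Fin k1 × Fin k2) :=
  Finset.univ.filter fun cd =>
    a.val ≤ cd.1.val ∧ s1 ∣ (cd.1.val - a.val) ∧ cd.1.val - a.val ≤ h_in + 2*p1 - k1 ∧
    b.val ≤ cd.2.val ∧ s2 ∣ (cd.2.val - b.val) ∧ cd.2.val - b.val ≤ w_in + 2*p2 - k2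

/-- The collection `𝒮 = {𝒜_(a,b) : (a,b) ∈ {1,…,k1} × {1,…,k2}}`. -/
def Ssets (h_in w_in k1 k2 s1 s2 p1 p2 : ℕ) : Finset (Finset (Fin k1 × Fin k2)) :=
  Finset.univ.image fun ab : Fin k1 × Fin k2 => AFin h_in w_in k1 k2 s1 s2 p1 p2 ab.1 ab.2


/-! ### Auxiliary lemmas for the operator norm computation -/

open Finset

lemma l1_norm_eq {ι : Type*} [Fintype ι] (x : PiLp 1 (fun _ : ι => ℝ)) : ‖x‖ = ∑ i, |x i| := by
  rw [PiLp.norm_eq_sum (by norm_num)]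
  simp [Real.norm_eq_abs]

lemma l1_single_norm {ι : Type*} [Fintype ι] [DecidableEq ι] (x : ι) :
    ‖(WithLp.equiv 1 (ι → ℝ)).symm (Pi.single x 1)‖ = 1 := by
  rw [l1_norm_eq]
  simp [Pi.single_apply, apply_ite abs, Finset.sum_ite_eq']

lemma l1_opNorm {ι κ : Type*} [Fintype ι] [Fintype κ] [DecidableEq ι] [Nonempty ι]
    (T : PiLp 1 (fun _ : ι => ℝ) →L[ℝ] PiLp 1 (fun _ : κ => ℝ)) :
    ‖T‖ = Finset.univ.sup' Finset.univ_nonempty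
      (fun x => ‖T ((WithLp.equiv 1 (ι → ℝ)).symm (Pi.single x 1))‖) := by
  set e : ι → PiLp 1 (fun _ : ι => ℝ) := fun x => (WithLp.equiv 1 (ι → ℝ)).symm (Pi.single x 1) with he
  set C := Finset.univ.sup' Finset.univ_nonempty (fun x => ‖T (e x)‖) with hC
  have hC0 : 0 ≤ C := le_trans (norm_nonneg _)
    (Finset.le_sup' (fun x => ‖T (e x)‖) (Finset.mem_univ (Classical.arbitrary ι)))
  have decomp : ∀ X : PiLp 1 (fun _ : ι => ℝ), X = ∑ x, X x • e x := by
    intro X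
    have h1 : (WithLp.linearEquiv 1 ℝ (ι → ℝ)) X = ∑ x, X x • (Pi.single x 1 : ι → ℝ) := by
      funext i
      simp [Finset.sum_apply, Pi.single_apply]
    calc X = (WithLp.linearEquiv 1 ℝ (ι → ℝ)).symm ((WithLp.linearEquiv 1 ℝ (ι → ℝ)) X) :=
          (LinearEquiv.symm_apply_apply _ _).symm
      _ = ∑ x, X x • e x := by rw [h1, map_sum]; simp only [map_smul]; rfl
  apply le_antisymm
  · apply T.opNorm_le_bound hC0
    intro X
    calc ‖T X‖ = ‖∑ x, X x • T (e x)‖ := by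
          conv_lhs => rw [decomp X]
          rw [map_sum]
          simp only [map_smul]
      _ ≤ ∑ x, ‖X x • T (e x)‖ := norm_sum_le _ _
      _ = ∑ x, |X x| * ‖T (e x)‖ := by simp [norm_smul]
      _ ≤ ∑ x, |X x| * C := by
          refine Finset.sum_le_sum fun x _ => ?_
          exact mul_le_mul_of_nonneg_left (Finset.le_sup' (fun x => ‖T (e x)‖) (Finset.mem_univ x)) (abs_nonneg _)
      _ = C * ‖X‖ := by rw [l1_norm_eq, Finset.mul_sum]; simp [mul_comm]
  · apply Finset.sup'_le
    intro x _
    calc ‖T (e x)‖ ≤ ‖T‖ * ‖e x‖ := T.le_opNorm _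
      _ = ‖T‖ := by rw [he]; rw [l1_single_norm]; ring

lemma oneD (s M A kk : ℕ) (hs : 0 < s) (F : ℕ → ℝ) :
    ∑ r ∈ Finset.range (M/s + 1), (if r*s ≤ A ∧ A - r*s < kk then F (A - r*s) else 0)
      = ∑ k ∈ Finset.range kk, (if k ≤ A ∧ s ∣ (A-k) ∧ A-k ≤ M then F k else 0) := by
  rw [← Finset.sum_filter, ← Finset.sum_filter]
  refine Finset.sum_nbij' (fun r => A - r*s) (fun k => (A-k)/s) ?_ ?_ ?_ ?_ ?_
  · intro r hr
    simp only [Finset.mem_filter, Finset.mem_range] at hr ⊢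
    obtain ⟨hr1, hr2, hr3⟩ := hr
    have hrM : r * s ≤ M := (Nat.le_div_iff_mul_le hs).mp (Nat.lt_succ_iff.mp hr1)
    have h4 : A - (A - r*s) = r*s := by omega
    exact ⟨hr3, by omega, by rw [h4]; exact dvd_mul_left s r, by omega⟩
  · intro k hk
    simp only [Finset.mem_filter, Finset.mem_range] at hk ⊢
    obtain ⟨hk1, hk2, hdvd, hk4⟩ := hk
    have hmul : (A-k)/s * s = A - k := Nat.div_mul_cancel hdvd
    refine ⟨?_, by omega, by omega⟩
    rw [Nat.lt_succ_iff, Nat.le_div_iff_mul_le hs]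
    omega
  · intro r hr
    simp only [Finset.mem_filter, Finset.mem_range] at hr
    have h4 : A - (A - r*s) = r*s := by omega
    rw [h4, Nat.mul_div_cancel _ hs]
  · intro k hk
    simp only [Finset.mem_filter, Finset.mem_range] at hk
    have hmul : (A-k)/s * s = A - k := Nat.div_mul_cancel hk.2.2.1
    omega
  · intro r hr; rfl

lemma padX_single (d_in h_in w_in p1 p2 : ℕ) (j j' : Fin d_in) (a : Fin h_in) (b : Fin w_in)
    (u v : ℕ) :
    padX d_in h_in w_in p1 p2 (Pi.single (j, a, b) 1) j' u v =
      if j' = j ∧ u = a.val + p1 ∧ v = b.val + p2 then 1 else 0 := by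
  have ha := a.isLt; have hb := b.isLt
  unfold padX
  split
  · rename_i h
    rw [Pi.single_apply]
    refine if_congr ?_ rfl rfl
    simp only [Prod.ext_iff, Fin.ext_iff]
    constructor
    · rintro ⟨h1, h2, h3⟩
      exact ⟨h1, by omega, by omega⟩
    · rintro ⟨h1, h2, h3⟩
      refine ⟨h1, show u - p1 = a.val by omega, show v - p2 = b.val by omega⟩
  · rename_i h
    rw [if_neg]
    rintro ⟨h1, h2, h3⟩
    omega

lemma conv_single_entry (d_in d_out h_in w_in k1 k2 s1 s2 p1 p2 : ℕ)
    (K : Fin d_out → Fin d_in → Fin k1 → Fin k2 → ℝ)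
    (j : Fin d_in) (a : Fin h_in) (b : Fin w_in)
    (i : Fin d_out) (r : Fin ((h_in + 2*p1 - k1)/s1 + 1)) (c : Fin ((w_in + 2*p2 - k2)/s2 + 1)) :
    convMap d_in d_out h_in w_in k1 k2 s1 s2 p1 p2 K (Pi.single (j, a, b) 1) (i, r, c) =
      if h : (r.val*s1 ≤ a.val+p1 ∧ a.val+p1 - r.val*s1 < k1) ∧
             (c.val*s2 ≤ b.val+p2 ∧ b.val+p2 - c.val*s2 < k2) then
        K i j ⟨a.val+p1 - r.val*s1, h.1.2⟩ ⟨b.val+p2 - c.val*s2, h.2.2⟩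
      else 0 := by
  unfold convMap
  simp only [padX_single, mul_ite, mul_one, mul_zero]
  by_cases h : (r.val*s1 ≤ a.val+p1 ∧ a.val+p1 - r.val*s1 < k1) ∧
      (c.val*s2 ≤ b.val+p2 ∧ b.val+p2 - c.val*s2 < k2)
  · rw [dif_pos h]
    obtain ⟨⟨h1, h2⟩, ⟨h3, h4⟩⟩ := h
    rw [Finset.sum_eq_single j]
    · rw [Finset.sum_eq_single (⟨a.val+p1 - r.val*s1, h2⟩ : Fin k1)]
      · rw [Finset.sum_eq_single (⟨b.val+p2 - c.val*s2, h4⟩ : Fin k2)]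
        · rw [if_pos ⟨rfl, show r.val*s1 + (a.val+p1-r.val*s1) = a.val+p1 by omega, show c.val*s2 + (b.val+p2-c.val*s2) = b.val+p2 by omega⟩]
        · intro t _ ht
          rw [if_neg]
          rintro ⟨-, -, h5⟩
          exact ht (Fin.ext (show t.val = b.val+p2-c.val*s2 by omega))
        · intro habs; exact absurd (Finset.mem_univ _) habs
      · intro k _ hk
        apply Finset.sum_eq_zero
        intro t _
        rw [if_neg]
        rintro ⟨-, h5, -⟩
        exact hk (Fin.ext (show k.val = a.val+p1-r.val*s1 by omega))
      · intro habs; exact absurd (Finset.mem_univ _) habs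
    · intro j' _ hj'
      apply Finset.sum_eq_zero; intro k _
      apply Finset.sum_eq_zero; intro t _
      rw [if_neg]
      rintro ⟨h5, -, -⟩
      exact hj' h5
    · intro habs; exact absurd (Finset.mem_univ _) habs
  · rw [dif_neg h]
    apply Finset.sum_eq_zero; intro j' _
    apply Finset.sum_eq_zero; intro k _
    apply Finset.sum_eq_zero; intro t _
    rw [if_neg]
    rintro ⟨-, h5, h6⟩
    have hk := k.isLt; have ht := t.isLt
    exact h ⟨⟨by omega, by omega⟩, ⟨by omega, by omega⟩⟩

/-- One-dimensional "column support" set. -/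
def Bset1 (hh kk ss pp : ℕ) (aa : ℕ) : Finset (Fin kk) :=
  Finset.univ.filter fun k => k.val ≤ aa + pp ∧ ss ∣ (aa + pp - k.val) ∧
    aa + pp - k.val ≤ hh + 2*pp - kk

lemma conv_single_norm (d_in d_out h_in w_in k1 k2 s1 s2 p1 p2 : ℕ)
    (hs1 : 0 < s1) (hs2 : 0 < s2)
    (K : Fin d_out → Fin d_in → Fin k1 → Fin k2 → ℝ)
    (j : Fin d_in) (a : Fin h_in) (b : Fin w_in) :
    ‖convCLM1 d_in d_out h_in w_in k1 k2 s1 s2 p1 p2 K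
        ((WithLp.equiv 1 _).symm (Pi.single (j, a, b) 1))‖ =
      ∑ kt ∈ (Bset1 h_in k1 s1 p1 a.val) ×ˢ (Bset1 w_in k2 s2 p2 b.val),
        ∑ i : Fin d_out, |K i j kt.1 kt.2| := by
  rw [l1_norm_eq]
  have happ : ∀ x : Fin d_out × Fin ((h_in + 2*p1 - k1)/s1 + 1) × Fin ((w_in + 2*p2 - k2)/s2 + 1),
      (convCLM1 d_in d_out h_in w_in k1 k2 s1 s2 p1 p2 K
        ((WithLp.equiv 1 _).symm (Pi.single (j, a, b) 1))) x
        = convMap d_in d_out h_in w_in k1 k2 s1 s2 p1 p2 K (Pi.single (j, a, b) 1) x :=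
    fun _ => rfl
  have key : ∀ i : Fin d_out,
      (∑ r : Fin ((h_in + 2*p1 - k1)/s1 + 1), ∑ c : Fin ((w_in + 2*p2 - k2)/s2 + 1),
        |convMap d_in d_out h_in w_in k1 k2 s1 s2 p1 p2 K (Pi.single (j, a, b) 1) (i, r, c)|)
      = ∑ k ∈ Bset1 h_in k1 s1 p1 a.val, ∑ t ∈ Bset1 w_in k2 s2 p2 b.val, |K i j k t| := by
    intro i
    set A1 := a.val + p1 with hA1
    set A2 := b.val + p2 with hA2
    set M1 := h_in + 2*p1 - k1 with hM1
    set M2 := w_in + 2*p2 - k2 with hM2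
    set KK : ℕ → ℕ → ℝ :=
      fun m n => if h : m < k1 ∧ n < k2 then |K i j ⟨m, h.1⟩ ⟨n, h.2⟩| else 0 with hKK
    have hKKval : ∀ (k : Fin k1) (t : Fin k2), KK k.val t.val = |K i j k t| := by
      intro k t
      rw [hKK]
      simp only []
      rw [dif_pos ⟨k.isLt, t.isLt⟩]
    have habs : ∀ (r : Fin (M1/s1 + 1)) (c : Fin (M2/s2 + 1)),
        |convMap d_in d_out h_in w_in k1 k2 s1 s2 p1 p2 K (Pi.single (j, a, b) 1) (i, r, c)| =
        if r.val*s1 ≤ A1 ∧ A1 - r.val*s1 < k1 then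
          (if c.val*s2 ≤ A2 ∧ A2 - c.val*s2 < k2 then
            KK (A1 - r.val*s1) (A2 - c.val*s2) else 0) else 0 := by
      intro r c
      rw [conv_single_entry, apply_dite abs, abs_zero]
      by_cases h1 : r.val*s1 ≤ A1 ∧ A1 - r.val*s1 < k1
      · by_cases h2 : c.val*s2 ≤ A2 ∧ A2 - c.val*s2 < k2
        · rw [dif_pos ⟨h1, h2⟩, if_pos h1, if_pos h2, hKK]
          simp only []
          rw [dif_pos ⟨h1.2, h2.2⟩]
        · rw [dif_neg (by tauto), if_pos h1, if_neg h2]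
      · rw [dif_neg (by tauto), if_neg h1]
    set G2 : ℕ → ℝ := fun m => ∑ tn ∈ Finset.range k2,
      (if tn ≤ A2 ∧ s2 ∣ (A2 - tn) ∧ A2 - tn ≤ M2 then KK m tn else 0) with hG2
    calc (∑ r : Fin (M1/s1 + 1), ∑ c : Fin (M2/s2 + 1),
          |convMap d_in d_out h_in w_in k1 k2 s1 s2 p1 p2 K (Pi.single (j, a, b) 1) (i, r, c)|)
        = ∑ r : Fin (M1/s1 + 1), (if r.val*s1 ≤ A1 ∧ A1 - r.val*s1 < k1 then
            (∑ c : Fin (M2/s2 + 1), if c.val*s2 ≤ A2 ∧ A2 - c.val*s2 < k2 then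
              KK (A1 - r.val*s1) (A2 - c.val*s2) else 0) else 0) := by
          refine Finset.sum_congr rfl fun r _ => ?_
          by_cases h1 : r.val*s1 ≤ A1 ∧ A1 - r.val*s1 < k1
          · rw [if_pos h1]
            exact Finset.sum_congr rfl fun c _ => by rw [habs, if_pos h1]
          · rw [if_neg h1]
            exact Finset.sum_eq_zero fun c _ => by rw [habs, if_neg h1]
      _ = ∑ r : Fin (M1/s1 + 1), (if r.val*s1 ≤ A1 ∧ A1 - r.val*s1 < k1 then
            (∑ tn ∈ Finset.range k2, if tn ≤ A2 ∧ s2 ∣ (A2 - tn) ∧ A2 - tn ≤ M2 then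
              KK (A1 - r.val*s1) tn else 0) else 0) := by
          refine Finset.sum_congr rfl fun r _ => ?_
          refine if_congr Iff.rfl ?_ rfl
          rw [← oneD s2 M2 A2 k2 hs2 (fun n => KK (A1 - r.val*s1) n)]
          exact (Fin.sum_univ_eq_sum_range
            (fun cn => if cn*s2 ≤ A2 ∧ A2 - cn*s2 < k2 then KK (A1 - r.val*s1) (A2 - cn*s2) else 0)
            (M2/s2 + 1))
      _ = ∑ rn ∈ Finset.range (M1/s1 + 1), (if rn*s1 ≤ A1 ∧ A1 - rn*s1 < k1 then
            G2 (A1 - rn*s1) else 0) :=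
          Fin.sum_univ_eq_sum_range
            (fun rn => if rn*s1 ≤ A1 ∧ A1 - rn*s1 < k1 then G2 (A1 - rn*s1) else 0) (M1/s1 + 1)
      _ = ∑ kn ∈ Finset.range k1, (if kn ≤ A1 ∧ s1 ∣ (A1 - kn) ∧ A1 - kn ≤ M1 then
            G2 kn else 0) := oneD s1 M1 A1 k1 hs1 G2
      _ = ∑ k ∈ Bset1 h_in k1 s1 p1 a.val, ∑ t ∈ Bset1 w_in k2 s2 p2 b.val, |K i j k t| := by
          rw [Bset1, Finset.sum_filter]
          rw [← Fin.sum_univ_eq_sum_range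
            (fun kn => if kn ≤ A1 ∧ s1 ∣ (A1 - kn) ∧ A1 - kn ≤ M1 then G2 kn else 0) k1]
          refine Finset.sum_congr rfl fun k _ => ?_
          refine if_congr Iff.rfl ?_ rfl
          rw [Bset1, Finset.sum_filter]
          rw [hG2]
          simp only []
          rw [← Fin.sum_univ_eq_sum_range
            (fun tn => if tn ≤ A2 ∧ s2 ∣ (A2 - tn) ∧ A2 - tn ≤ M2 then KK k.val tn else 0) k2]
          exact Finset.sum_congr rfl fun t _ => if_congr Iff.rfl (hKKval k t) rfl
  calc (∑ x : Fin d_out × Fin ((h_in + 2*p1 - k1)/s1 + 1) × Fin ((w_in + 2*p2 - k2)/s2 + 1),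
        |(convCLM1 d_in d_out h_in w_in k1 k2 s1 s2 p1 p2 K
          ((WithLp.equiv 1 _).symm (Pi.single (j, a, b) 1))) x|)
      = ∑ i : Fin d_out, ∑ r : Fin ((h_in + 2*p1 - k1)/s1 + 1),
          ∑ c : Fin ((w_in + 2*p2 - k2)/s2 + 1),
          |convMap d_in d_out h_in w_in k1 k2 s1 s2 p1 p2 K (Pi.single (j, a, b) 1) (i, r, c)| := by
        simp only [happ]
        rw [Fintype.sum_prod_type]
        exact Finset.sum_congr rfl fun i _ => Fintype.sum_prod_type _
    _ = ∑ i : Fin d_out, ∑ k ∈ Bset1 h_in k1 s1 p1 a.val, ∑ t ∈ Bset1 w_in k2 s2 p2 b.val,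
          |K i j k t| := Finset.sum_congr rfl fun i _ => key i
    _ = ∑ kt ∈ (Bset1 h_in k1 s1 p1 a.val) ×ˢ (Bset1 w_in k2 s2 p2 b.val),
          ∑ i : Fin d_out, |K i j kt.1 kt.2| := by
        rw [Finset.sum_product]
        rw [Finset.sum_comm]
        exact Finset.sum_congr rfl fun k _ => Finset.sum_comm

lemma B1_subset_A1 (hh kk ss pp aa : ℕ)
    (hne : (Bset1 hh kk ss pp aa).Nonempty) :
    ∃ a0 : Fin kk, Bset1 hh kk ss pp aa ⊆
      Finset.univ.filter (fun k : Fin kk => a0.val ≤ k.val ∧ ss ∣ (k.val - a0.val) ∧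
        k.val - a0.val ≤ hh + 2*pp - kk) := by
  refine ⟨(Bset1 hh kk ss pp aa).min' hne, ?_⟩
  intro k hk
  have hmin := (Bset1 hh kk ss pp aa).min'_mem hne
  set a0 := (Bset1 hh kk ss pp aa).min' hne with ha0
  have hle : a0 ≤ k := Finset.min'_le _ _ hk
  simp only [Bset1, Finset.mem_filter, Finset.mem_univ, true_and] at hk hmin ⊢
  obtain ⟨hk1, hk2, hk3⟩ := hk
  obtain ⟨hm1, hm2, hm3⟩ := hmin
  have hle' : a0.val ≤ k.val := hle
  have hdvd : ss ∣ (k.val - a0.val) := by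
    have := Nat.dvd_sub hm2 hk2
    have heq : (aa + pp - a0.val) - (aa + pp - k.val) = k.val - a0.val := by omega
    rwa [heq] at this
  exact ⟨hle', hdvd, by omega⟩

lemma A1_subset_B1 (hh kk ss pp c1 : ℕ) (hss : 0 < ss) (hkk : 0 < kk)
    (hcp : pp ≤ c1 * ss) (hass : kk + c1 * ss ≤ hh + pp) (a0 : Fin kk) :
    ∃ aa : ℕ, aa < hh ∧
      (Finset.univ.filter (fun k : Fin kk => a0.val ≤ k.val ∧ ss ∣ (k.val - a0.val) ∧
        k.val - a0.val ≤ hh + 2*pp - kk)) ⊆ Bset1 hh kk ss pp aa := by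
  have ha0 := a0.isLt
  set M := hh + 2*pp - kk with hMdef
  set E := ss * (min M (kk - 1 - a0.val) / ss) with hE
  set D := max (c1*ss) E with hD
  have hEmin : E ≤ min M (kk - 1 - a0.val) := by
    rw [hE, mul_comm]; exact Nat.div_mul_le_self _ _
  have hdvdD : ss ∣ D := by
    rcases max_choice (c1*ss) E with h | h <;> rw [hD, h]
    · exact dvd_mul_left ss c1
    · exact dvd_mul_right ss _
  have hDM : D ≤ M := by
    rw [hD]; exact max_le (by omega) (by omega)
  have hDpp : pp ≤ D := le_trans hcp (le_max_left _ _)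
  have hup : a0.val + D ≤ hh + pp - 1 := by
    rcases max_choice (c1*ss) E with h | h <;> rw [hD, h] <;> omega
  refine ⟨a0.val + D - pp, by omega, ?_⟩
  intro k hk
  simp only [Bset1, Finset.mem_filter, Finset.mem_univ, true_and] at hk ⊢
  obtain ⟨h1, hdvd, h3⟩ := hk
  have hkk1 := k.isLt
  obtain ⟨q, hq⟩ := hdvd
  have hkD : k.val - a0.val ≤ D := by
    have hqM : ss * q ≤ M := by omega
    have hqk : ss * q ≤ kk - 1 - a0.val := by omega
    have hqle : q * ss ≤ min M (kk - 1 - a0.val) := by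
      rw [mul_comm]; exact le_min hqM hqk
    have h5 : q ≤ min M (kk - 1 - a0.val) / ss := (Nat.le_div_iff_mul_le hss).mpr hqle
    have h6 : ss * q ≤ E := by rw [hE]; exact Nat.mul_le_mul_left ss h5
    omega
  refine ⟨by omega, ?_, by omega⟩
  have heq : a0.val + D - pp + pp - k.val = D - (k.val - a0.val) := by omega
  rw [heq]
  exact Nat.dvd_sub hdvdD ⟨q, hq⟩

set_option maxHeartbeats 1600000

/-- Under Assumption 1 the `ℓ1 → ℓ1` operator norm of `conv`
equals `max_j max_{𝒜 ∈ 𝒮} ∑_{(k,t) ∈ 𝒜} ∑_i |K i j k t|`. -/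
theorem conv_opNorm_l1 (d_in d_out h_in w_in k1 k2 s1 s2 p1 p2 : ℕ)
    (hdin : 0 < d_in) (hdout : 0 < d_out) (hhin : 0 < h_in) (hwin : 0 < w_in)
    (hk1pos : 0 < k1) (hk2pos : 0 < k2) (hs1 : 0 < s1) (hs2 : 0 < s2)
    (hk1 : k1 ≤ h_in + 2*p1) (hk2 : k2 ≤ w_in + 2*p2)
    (K : Fin d_out → Fin d_in → Fin k1 → Fin k2 → ℝ)
    -- Assumption 1
    (c1 c2 : ℕ) (hc1pos : 0 < c1) (hc2pos : 0 < c2)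
    (hc1 : p1 ≤ c1 * s1) (hc2 : p2 ≤ c2 * s2)
    (hc1min : ∀ m : ℕ, 0 < m → p1 ≤ m * s1 → c1 ≤ m)
    (hc2min : ∀ m : ℕ, 0 < m → p2 ≤ m * s2 → c2 ≤ m)
    (ha1 : k1 + c1 * s1 ≤ h_in + p1) (ha2 : k2 + c2 * s2 ≤ w_in + p2) :
    ‖convCLM1 d_in d_out h_in w_in k1 k2 s1 s2 p1 p2 K‖ =
      Finset.univ.sup' (Finset.univ_nonempty_iff.mpr (Fin.pos_iff_nonempty.mp hdin))
        (fun j : Fin d_in =>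
          (Ssets h_in w_in k1 k2 s1 s2 p1 p2).sup'
            ((Finset.univ_nonempty_iff.mpr ⟨(⟨0, hk1pos⟩, ⟨0, hk2pos⟩)⟩).image _)
            (fun A => ∑ kt ∈ A, ∑ i : Fin d_out, |K i j kt.1 kt.2|)) := by
  haveI hne : Nonempty (Fin d_in × Fin h_in × Fin w_in) :=
    ⟨(⟨0, hdin⟩, ⟨0, hhin⟩, ⟨0, hwin⟩)⟩
  have hSne : (Ssets h_in w_in k1 k2 s1 s2 p1 p2).Nonempty :=
    ((Finset.univ_nonempty_iff.mpr ⟨(⟨0, hk1pos⟩, ⟨0, hk2pos⟩)⟩).image _)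
  have hA_eq_prod : ∀ (a0 : Fin k1) (b0 : Fin k2),
      AFin h_in w_in k1 k2 s1 s2 p1 p2 a0 b0 =
        (Finset.univ.filter (fun k : Fin k1 => a0.val ≤ k.val ∧ s1 ∣ (k.val - a0.val) ∧
          k.val - a0.val ≤ h_in + 2*p1 - k1)) ×ˢ
        (Finset.univ.filter (fun t : Fin k2 => b0.val ≤ t.val ∧ s2 ∣ (t.val - b0.val) ∧
          t.val - b0.val ≤ w_in + 2*p2 - k2)) := by
    intro a0 b0
    ext kt
    simp only [AFin, Finset.mem_filter, Finset.mem_univ, true_and, Finset.mem_product]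
    tauto
  have hAmem : ∀ (a0 : Fin k1) (b0 : Fin k2),
      AFin h_in w_in k1 k2 s1 s2 p1 p2 a0 b0 ∈ Ssets h_in w_in k1 k2 s1 s2 p1 p2 := by
    intro a0 b0
    exact Finset.mem_image.mpr ⟨(a0, b0), Finset.mem_univ _, rfl⟩
  have hRHS0 : (0:ℝ) ≤
      Finset.univ.sup' (Finset.univ_nonempty_iff.mpr (Fin.pos_iff_nonempty.mp hdin))
        (fun j : Fin d_in =>
          (Ssets h_in w_in k1 k2 s1 s2 p1 p2).sup' hSne
            (fun A => ∑ kt ∈ A, ∑ i : Fin d_out, |K i j kt.1 kt.2|)) := by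
    obtain ⟨A0, hA0⟩ := hSne
    refine le_trans ?_ (Finset.le_sup' _ (Finset.mem_univ (⟨0, hdin⟩ : Fin d_in)))
    refine le_trans ?_ (Finset.le_sup' _ hA0)
    exact Finset.sum_nonneg fun kt _ => Finset.sum_nonneg fun i _ => abs_nonneg _
  rw [l1_opNorm]
  apply le_antisymm
  · refine Finset.sup'_le _ _ fun x _ => ?_
    obtain ⟨j, a, b⟩ := x
    rw [conv_single_norm d_in d_out h_in w_in k1 k2 s1 s2 p1 p2 hs1 hs2 K j a b]
    by_cases hB1 : (Bset1 h_in k1 s1 p1 a.val).Nonempty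
    · by_cases hB2 : (Bset1 w_in k2 s2 p2 b.val).Nonempty
      · obtain ⟨a0, hsub1⟩ := B1_subset_A1 h_in k1 s1 p1 a.val hB1
        obtain ⟨b0, hsub2⟩ := B1_subset_A1 w_in k2 s2 p2 b.val hB2
        have hsub : (Bset1 h_in k1 s1 p1 a.val) ×ˢ (Bset1 w_in k2 s2 p2 b.val) ⊆
            AFin h_in w_in k1 k2 s1 s2 p1 p2 a0 b0 := by
          rw [hA_eq_prod]
          exact Finset.product_subset_product hsub1 hsub2
        calc (∑ kt ∈ (Bset1 h_in k1 s1 p1 a.val) ×ˢ (Bset1 w_in k2 s2 p2 b.val),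
              ∑ i : Fin d_out, |K i j kt.1 kt.2|)
            ≤ ∑ kt ∈ AFin h_in w_in k1 k2 s1 s2 p1 p2 a0 b0,
                ∑ i : Fin d_out, |K i j kt.1 kt.2| :=
              Finset.sum_le_sum_of_subset_of_nonneg hsub
                (fun kt _ _ => Finset.sum_nonneg fun i _ => abs_nonneg _)
          _ ≤ (Ssets h_in w_in k1 k2 s1 s2 p1 p2).sup' hSne
                (fun A => ∑ kt ∈ A, ∑ i : Fin d_out, |K i j kt.1 kt.2|) :=
              Finset.le_sup' (f := fun A => ∑ kt ∈ A, ∑ i : Fin d_out, |K i j kt.1 kt.2|)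
                (hAmem a0 b0)
          _ ≤ _ := Finset.le_sup'
              (fun j : Fin d_in => (Ssets h_in w_in k1 k2 s1 s2 p1 p2).sup' hSne
                (fun A => ∑ kt ∈ A, ∑ i : Fin d_out, |K i j kt.1 kt.2|))
              (Finset.mem_univ j)
      · rw [Finset.not_nonempty_iff_eq_empty] at hB2
        rw [hB2, Finset.product_empty, Finset.sum_empty]
        exact hRHS0
    · rw [Finset.not_nonempty_iff_eq_empty] at hB1
      rw [hB1, Finset.empty_product, Finset.sum_empty]
      exact hRHS0
  · refine Finset.sup'_le _ _ fun j _ => ?_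
    refine Finset.sup'_le _ _ fun A hA => ?_
    obtain ⟨ab, -, rfl⟩ := Finset.mem_image.mp hA
    obtain ⟨a0, b0⟩ := ab
    obtain ⟨aa, haa, hsub1⟩ := A1_subset_B1 h_in k1 s1 p1 c1 hs1 hk1pos hc1 ha1 a0
    obtain ⟨bb, hbb, hsub2⟩ := A1_subset_B1 w_in k2 s2 p2 c2 hs2 hk2pos hc2 ha2 b0
    have hsub : AFin h_in w_in k1 k2 s1 s2 p1 p2 a0 b0 ⊆
        (Bset1 h_in k1 s1 p1 aa) ×ˢ (Bset1 w_in k2 s2 p2 bb) := by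
      rw [hA_eq_prod]
      exact Finset.product_subset_product hsub1 hsub2
    refine le_trans ?_ (Finset.le_sup'
      (fun x : Fin d_in × Fin h_in × Fin w_in =>
        ‖convCLM1 d_in d_out h_in w_in k1 k2 s1 s2 p1 p2 K
          ((WithLp.equiv 1 (Fin d_in × Fin h_in × Fin w_in → ℝ)).symm (Pi.single x 1))‖)
      (Finset.mem_univ (j, ⟨aa, haa⟩, ⟨bb, hbb⟩)))
    rw [conv_single_norm d_in d_out h_in w_in k1 k2 s1 s2 p1 p2 hs1 hs2 K j ⟨aa, haa⟩ ⟨bb, hbb⟩]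
    exact Finset.sum_le_sum_of_subset_of_nonneg hsub
      (fun kt _ _ => Finset.sum_nonneg fun i _ => abs_nonneg _)

end
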